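/- Let P be a 2-torsion free unital ring with a nontrivial idempotent e₁, set e₂ = 1 − e₁, and let d : P → P be a commuting Jordan derivation. Then d(t) = 0 for every t ∈ e₂Pe₁. -/
import Mathlib


/-- Lemma 2.5: d(t) = 0 for all t ∈ e₂Pe₁. -/
theorem commuting_jordan_derivation_twentyone {P : Type*} [Ring P]
    (htf : ∀ p : P, 2 • p = 0 → p = 0)
    (e₁ : P) (he : e₁ * e₁ = e₁) (he0 : e₁ ≠ 0) (he1 : e₁ ≠ 1)
    (d : P → P)
    (hadd : ∀ x y : P, d (x + y) = d x + d y)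
    (hJ : ∀ p : P, d (p ^ 2) = d p * p + p * d p)
    (hC : ∀ p : P, d p * p = p * d p) :
    ∀ t : P, (∃ x : P, t = (1 - e₁) * x * e₁) → d t = 0 := by
  -- linearized Jordan identity
  have hlin : ∀ x y : P, d (x * y + y * x)
      = d x * y + x * d y + d y * x + y * d x := by
    intro x y
    have h1 : d ((x + y) ^ 2) = d (x ^ 2) + d (x * y + y * x) + d (y ^ 2) := by
      rw [show (x + y) ^ 2 = x ^ 2 + (x * y + y * x) + y ^ 2 by noncomm_ring, hadd, hadd]
    have h2 := hJ (x + y)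
    rw [hadd] at h2
    have h3 : d (x * y + y * x)
        = d ((x + y) ^ 2) - d (x ^ 2) - d (y ^ 2) := by
      rw [h1]; abel
    rw [h2, hJ x, hJ y] at h3
    rw [h3]; noncomm_ring
  -- linearized commuting identity
  have hlc : ∀ x y : P, d x * y + d y * x = x * d y + y * d x := by
    intro x y
    have h1 := hC (x + y)
    rw [hadd] at h1
    have h2 := hC x
    have h3 := hC y
    have h4 : (d x + d y) * (x + y) = d x * x + (d x * y + d y * x) + d y * y := by
      noncomm_ring
    have h5 : (x + y) * (d x + d y) = d x * x + (x * d y + y * d x) + d y * y := by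
      rw [h2, h3]; noncomm_ring
    rw [h4, h5] at h1
    exact add_left_cancel (add_right_cancel h1)
  -- d e₁ = 0
  have hde : d e₁ = 0 := by
    have h1 := hJ e₁
    rw [sq, he, hC e₁] at h1
    -- h1 : d e₁ = e₁ * d e₁ + e₁ * d e₁
    have h2 : e₁ * d e₁ = e₁ * (e₁ * d e₁) + e₁ * (e₁ * d e₁) := by
      conv_lhs => rw [h1]
      rw [mul_add]
    rw [← mul_assoc, he] at h2
    have h3 : e₁ * d e₁ = 0 :=
      add_left_cancel (show e₁ * d e₁ + e₁ * d e₁ = e₁ * d e₁ + 0 by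
        rw [add_zero]; exact h2.symm)
    rw [h3, add_zero] at h1
    exact h1
  rintro t ⟨x, rfl⟩
  set t := (1 - e₁) * x * e₁ with ht
  have hte : t * e₁ = t := by rw [ht, mul_assoc ((1 - e₁) * x) e₁ e₁, he]
  have het : e₁ * t = 0 := by
    rw [ht, ← mul_assoc, ← mul_assoc, mul_sub, mul_one, he, sub_self, zero_mul, zero_mul]
  -- from linearized Jordan with t, e₁:
  have h1 := hlin t e₁
  rw [hte, het, add_zero, hde, mul_zero, zero_mul, add_zero, add_zero] at h1
  -- h1 : d t = d t * e₁ + e₁ * d t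
  have h2 := hlc t e₁
  rw [hde, mul_zero, zero_mul, add_zero, zero_add] at h2
  -- h2 : d t * e₁ = e₁ * d t
  have h3 : d t * e₁ = d t * e₁ + d t * e₁ := by
    conv_lhs => rw [h1]
    rw [add_mul, ← h2, mul_assoc, he]
  have h4 : d t * e₁ = 0 :=
    add_left_cancel (show d t * e₁ + d t * e₁ = d t * e₁ + 0 by
      rw [add_zero]; exact h3.symm)
  rw [h1, h4, ← h2, h4, add_zero]
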